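/- For z̄ ∈ S^2 and v ∈ R^3 with |v| ≤ P, and c ≥ 2P, the kernel K_T(z̄, v̂) = (1 + c^{-1} z̄·v̂)^{-2}(1 - c^{-2}|v̂|^2)(z̄ + c^{-1} v̂), with v̂ = (1+c^{-2}|v|^2)^{-1/2} v, satisfies |K_T(z̄,v̂) - (z̄ + c^{-1}[v - 2(z̄·v)z̄] + c^{-2}[3(z̄·v)^2 z̄ - |v|^2 z̄ - 2(z̄·v)v])| ≤ M c^{-3} for a constant M depending only on P. -/

import Mathlib

set_option maxHeartbeats 1000000

open Real
open scoped RealInnerProductSpace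

noncomputable section

abbrev E3 := EuclideanSpace ℝ (Fin 3)

/-- Relativistic velocity `v̂ = (1 + c⁻²|v|²)^{-1/2} v`. -/
def vhat (c : ℝ) (v : E3) : E3 := (Real.sqrt (1 + c⁻¹ ^ 2 * ‖v‖ ^ 2))⁻¹ • v

/-- The kernel `K_T(z̄, v̂) = (1 + c⁻¹ z̄·v̂)⁻² (1 - c⁻²|v̂|²)(z̄ + c⁻¹ v̂)`. -/
def KT (c : ℝ) (zb v : E3) : E3 :=
  (((1 + c⁻¹ * ⟪zb, vhat c v⟫)⁻¹) ^ 2 * (1 - c⁻¹ ^ 2 * ‖vhat c v‖ ^ 2)) •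
    (zb + c⁻¹ • vhat c v)

private lemma abs_mul_le' {a b A B : ℝ} (ha : |a| ≤ A) (hb : |b| ≤ B) : |a * b| ≤ A * B := by
  rw [abs_mul]
  exact mul_le_mul ha hb (abs_nonneg b) ((abs_nonneg a).trans ha)

private lemma abs_sub_le'' (a b : ℝ) : |a - b| ≤ |a| + |b| := by
  rw [sub_eq_add_neg]
  exact le_trans (abs_add_le _ _) (by rw [abs_neg])


private lemma quadbound (x : ℝ) (h : |x| ≤ 1/2) : |1 - 2*x + 3*x^2| ≤ 3 := by
  obtain ⟨h1, h2⟩ := abs_le.1 h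
  have hsq : x^2 ≤ 1/4 := by nlinarith
  rw [abs_le]; constructor <;> nlinarith

lemma scalarA (ε s w Q g : ℝ) (hε : 0 < ε) (hε1 : ε ≤ 1) (hw : 0 ≤ w)
    (hsw : |s| ≤ w) (hwQ : w ≤ Q) (hQ : 1 ≤ Q) (hεw : ε * w ≤ 1/2)
    (hg0 : 0 < g) (hg1 : g ≤ 1) (hgid : g^2 * (1 + ε^2*w^2) = 1)
    (hgnear : 1 - g ≤ ε^2 * w^2) :
    |g^2 * ((1 + ε*(g*s))⁻¹)^2 - (1 - 2*ε*s + ε^2*(3*s^2 - w^2))| ≤ 50*(ε^3*Q^5) := by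
  have hus : |ε*(g*s)| ≤ ε * w := by
    rw [abs_mul, abs_mul, abs_of_pos hε, abs_of_pos hg0]
    have h1 : g * |s| ≤ 1 * w := mul_le_mul hg1 hsw (abs_nonneg s) zero_le_one
    nlinarith
  have huh : |ε*(g*s)| ≤ 1/2 := le_trans hus hεw
  obtain ⟨hul, hur⟩ := abs_le.1 huh
  have hd0 : (0:ℝ) < 1 + ε*(g*s) := by linarith
  have hd2 : (1 + ε*(g*s))⁻¹ ≤ 2 := by
    rw [show (2:ℝ) = ((1:ℝ)/2)⁻¹ by norm_num]
    exact inv_anti₀ (by norm_num) (by linarith)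
  have hj0 : 0 ≤ ((1 + ε*(g*s))⁻¹)^2 := sq_nonneg _
  have hj4 : ((1 + ε*(g*s))⁻¹)^2 ≤ 4 := by
    have := pow_le_pow_left₀ (inv_nonneg.2 hd0.le) hd2 2
    norm_num at this ⊢; linarith
  have hg2le : g^2 ≤ 1 := by nlinarith
  have hε3 : (0:ℝ) < ε^3 := pow_pos hε 3
  have hQ35 : Q^3 ≤ Q^5 := pow_le_pow_right₀ hQ (by norm_num)
  have hQ45 : Q^4 ≤ Q^5 := pow_le_pow_right₀ hQ (by norm_num)
  have hε43 : ε^4 ≤ ε^3 := pow_le_pow_of_le_one hε.le hε1 (by norm_num)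
  have hw2 : w^2 ≤ Q^2 := pow_le_pow_left₀ hw hwQ 2
  have hsQabsQ : |s| ≤ Q := hsw.trans hwQ
  -- key decomposition
  have key : g^2 * ((1 + ε*(g*s))⁻¹)^2 - (1 - 2*ε*s + ε^2*(3*s^2 - w^2)) =
      (-(g^2 * ((ε*(g*s))^3*(4+3*(ε*(g*s))))) * ((1 + ε*(g*s))⁻¹)^2)
      + g^2 * (-(2*(ε*s))*(g-1) + 3*(ε*s)^2*(g^2-1))
      + (g^2 - (1 - ε^2*w^2)) * (1 - 2*ε*s + 3*ε^2*s^2)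
      + (2*ε^3*s*w^2 - 3*ε^4*s^2*w^2) := by
    have hu := mul_inv_cancel₀ hd0.ne'
    linear_combination g^2*(1-2*(ε*(g*s))+3*(ε*(g*s))^2)*((1 + ε*(g*s))*(1 + ε*(g*s))⁻¹+1) * hu
  rw [key]
  have habs4 : ∀ a b c d : ℝ, |a + b + c + d| ≤ |a| + |b| + |c| + |d| := by
    intro a b c d
    calc |a + b + c + d| ≤ |a + b + c| + |d| := abs_add_le _ _
      _ ≤ (|a + b| + |c|) + |d| := by linarith [abs_add_le (a+b) c]
      _ ≤ ((|a| + |b|) + |c|) + |d| := by linarith [abs_add_le a b]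
  refine le_trans (habs4 _ _ _ _) ?_
  -- T1
  have hu3 : |(ε*(g*s))^3| ≤ (ε*w)^3 := by
    rw [abs_pow]; exact pow_le_pow_left₀ (abs_nonneg _) hus 3
  have h43 : |4 + 3*(ε*(g*s))| ≤ 11/2 := by
    rw [abs_le]; constructor <;> linarith
  have hT1 : |(-(g^2 * ((ε*(g*s))^3*(4+3*(ε*(g*s))))) * ((1 + ε*(g*s))⁻¹)^2)| ≤
      (1 * ((ε*w)^3 * (11/2))) * 4 := by
    rw [neg_mul, abs_neg]
    exact abs_mul_le' (abs_mul_le' (abs_le.2 ⟨by nlinarith [sq_nonneg g], hg2le⟩)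
      (abs_mul_le' hu3 h43)) (abs_le.2 ⟨by linarith, hj4⟩)
  have hT1' : (1 * ((ε*w)^3 * (11/2))) * 4 ≤ 22 * (ε^3*Q^5) := by
    have h1 : w^3 ≤ Q^5 := le_trans (pow_le_pow_left₀ hw hwQ 3) hQ35
    have hA : ε^3*w^3 ≤ ε^3*Q^5 := mul_le_mul_of_nonneg_left h1 hε3.le
    rw [mul_pow]; linarith
  -- T2
  have hεs : |ε*s| ≤ ε*Q := by
    rw [abs_mul, abs_of_pos hε]
    exact mul_le_mul_of_nonneg_left hsQabsQ hε.le
  have hgm1 : |g - 1| ≤ ε^2*Q^2 := by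
    have h1 : ε^2*w^2 ≤ ε^2*Q^2 := mul_le_mul_of_nonneg_left hw2 (by positivity)
    rw [abs_le]; constructor
    · linarith
    · nlinarith
  have hg2m1 : |g^2 - 1| ≤ 2*(ε^2*Q^2) := by
    have h1 : ε^2*w^2 ≤ ε^2*Q^2 := mul_le_mul_of_nonneg_left hw2 (by positivity)
    rw [abs_le]; constructor
    · nlinarith
    · nlinarith
  have hT2 : |g^2 * (-(2*(ε*s))*(g-1) + 3*(ε*s)^2*(g^2-1))| ≤
      1 * (2*(ε*Q)*(ε^2*Q^2) + 3*((ε*Q)^2*(2*(ε^2*Q^2)))) := by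
    have h1 : |(-(2*(ε*s))*(g-1))| ≤ (2*(ε*Q))*(ε^2*Q^2) := by
      rw [abs_mul, abs_neg]
      refine mul_le_mul ?_ hgm1 (abs_nonneg _) (by positivity)
      rw [abs_mul, abs_of_nonneg (by norm_num : (0:ℝ) ≤ 2)]
      exact mul_le_mul_of_nonneg_left hεs (by norm_num)
    have h2 : |3*(ε*s)^2*(g^2-1)| ≤ 3*((ε*Q)^2*(2*(ε^2*Q^2))) := by
      rw [show (3:ℝ)*(ε*s)^2*(g^2-1) = 3*((ε*s)^2*(g^2-1)) by ring, abs_mul,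
        abs_of_nonneg (by norm_num : (0:ℝ) ≤ 3)]
      refine mul_le_mul_of_nonneg_left ?_ (by norm_num)
      refine abs_mul_le' ?_ hg2m1
      rw [abs_pow]
      exact pow_le_pow_left₀ (abs_nonneg _) hεs 2
    have hinner : |(-(2*(ε*s))*(g-1) + 3*(ε*s)^2*(g^2-1))| ≤
        2*(ε*Q)*(ε^2*Q^2) + 3*((ε*Q)^2*(2*(ε^2*Q^2))) := by
      refine le_trans (abs_add_le _ _) ?_
      linarith
    exact abs_mul_le' (abs_le.2 ⟨by nlinarith [sq_nonneg g], hg2le⟩) hinner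
  have hT2' : 1 * (2*(ε*Q)*(ε^2*Q^2) + 3*((ε*Q)^2*(2*(ε^2*Q^2)))) ≤ 8 * (ε^3*Q^5) := by
    have hA : ε^3*Q^3 ≤ ε^3*Q^5 := mul_le_mul_of_nonneg_left hQ35 hε3.le
    have hB : ε^4*Q^4 ≤ ε^3*Q^5 :=
      mul_le_mul hε43 hQ45 (by positivity) hε3.le
    linarith [hA, hB]
  -- T3
  have hfac : g^2 - (1 - ε^2*w^2) = g^2*(ε^2*w^2)^2 := by
    linear_combination (1 - ε^2*w^2) * hgid
  have hT3 : |(g^2 - (1 - ε^2*w^2)) * (1 - 2*ε*s + 3*ε^2*s^2)| ≤ (ε^3*Q^4) * 3 := by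
    refine abs_mul_le' ?_ ?_
    · rw [hfac, abs_of_nonneg (by positivity)]
      have h2 : w^4 ≤ Q^4 := pow_le_pow_left₀ hw hwQ 4
      have h3 : (ε^2*w^2)^2 ≤ ε^3*Q^4 := by
        calc (ε^2*w^2)^2 = ε^4*w^4 := by ring
          _ ≤ ε^3*Q^4 := mul_le_mul hε43 h2 (by positivity) hε3.le
      calc g^2*(ε^2*w^2)^2 ≤ 1*(ε^2*w^2)^2 :=
            mul_le_mul_of_nonneg_right hg2le (by positivity)
        _ ≤ ε^3*Q^4 := by linarith
    · have hgs : |ε*s| ≤ 1/2 := by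
        rw [abs_mul, abs_of_pos hε]
        calc ε * |s| ≤ ε * w := mul_le_mul_of_nonneg_left hsw hε.le
          _ ≤ 1/2 := hεw
      have heq : 1 - 2*ε*s + 3*ε^2*s^2 = 1 - 2*(ε*s) + 3*(ε*s)^2 := by ring
      rw [heq]
      exact quadbound _ hgs
  have hT3' : (ε^3*Q^4) * 3 ≤ 3 * (ε^3*Q^5) := by
    have hA : ε^3*Q^4 ≤ ε^3*Q^5 := mul_le_mul_of_nonneg_left hQ45 hε3.le
    linarith
  -- T4
  have hT4 : |2*ε^3*s*w^2 - 3*ε^4*s^2*w^2| ≤ 5 * (ε^3*Q^5) := by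
    have hs2 : s^2 ≤ Q^2 := by
      rw [← sq_abs s]; exact pow_le_pow_left₀ (abs_nonneg s) hsQabsQ 2
    have h1 : |2*ε^3*s*w^2| ≤ 2*(ε^3*Q^3) := by
      rw [show 2*ε^3*s*w^2 = (2*ε^3*w^2)*s by ring, abs_mul,
        abs_of_nonneg (by positivity : (0:ℝ) ≤ 2*ε^3*w^2)]
      have hA : w^2*|s| ≤ Q^2*Q := mul_le_mul hw2 hsQabsQ (abs_nonneg s) (by positivity)
      have hB : ε^3*(w^2*|s|) ≤ ε^3*(Q^2*Q) := mul_le_mul_of_nonneg_left hA hε3.le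
      linarith [hB]
    have h2 : |3*ε^4*s^2*w^2| ≤ 3*(ε^3*Q^4) := by
      rw [abs_of_nonneg (by positivity)]
      have hA : s^2*w^2 ≤ Q^2*Q^2 := mul_le_mul hs2 hw2 (sq_nonneg w) (by positivity)
      have hB : ε^4*(s^2*w^2) ≤ ε^3*(Q^2*Q^2) :=
        mul_le_mul hε43 hA (by positivity) hε3.le
      linarith [hB]
    have hA : ε^3*Q^3 ≤ ε^3*Q^5 := mul_le_mul_of_nonneg_left hQ35 hε3.le
    have hB : ε^3*Q^4 ≤ ε^3*Q^5 := mul_le_mul_of_nonneg_left hQ45 hε3.le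
    calc |2*ε^3*s*w^2 - 3*ε^4*s^2*w^2| ≤ |2*ε^3*s*w^2| + |3*ε^4*s^2*w^2| := abs_sub_le'' _ _
      _ ≤ 2*(ε^3*Q^3) + 3*(ε^3*Q^4) := by linarith
      _ ≤ 5 * (ε^3*Q^5) := by linarith
  have hpos : (0:ℝ) ≤ ε^3*Q^5 := by positivity
  linarith

private lemma abs_mul_le2 {a b A B : ℝ} (ha : |a| ≤ A) (hb : |b| ≤ B) : |a * b| ≤ A * B := by
  rw [abs_mul]
  exact mul_le_mul ha hb (abs_nonneg b) ((abs_nonneg a).trans ha)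

lemma scalarB (ε s w Q g : ℝ) (hε : 0 < ε) (hε1 : ε ≤ 1) (hw : 0 ≤ w)
    (hsw : |s| ≤ w) (hwQ : w ≤ Q) (hQ : 1 ≤ Q) (hεw : ε * w ≤ 1/2)
    (hg0 : 0 < g) (hg1 : g ≤ 1) (hgid : g^2 * (1 + ε^2*w^2) = 1)
    (hgnear : 1 - g ≤ ε^2 * w^2) :
    |ε * g^3 * ((1 + ε*(g*s))⁻¹)^2 - (ε - 2*ε^2*s)| ≤ 30*(ε^3*Q^3) := by
  have hus : |ε*(g*s)| ≤ ε * w := by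
    rw [abs_mul, abs_mul, abs_of_pos hε, abs_of_pos hg0]
    have h1 : g * |s| ≤ 1 * w := mul_le_mul hg1 hsw (abs_nonneg s) zero_le_one
    nlinarith
  have huh : |ε*(g*s)| ≤ 1/2 := le_trans hus hεw
  obtain ⟨hul, hur⟩ := abs_le.1 huh
  have hd0 : (0:ℝ) < 1 + ε*(g*s) := by linarith
  have hd2 : (1 + ε*(g*s))⁻¹ ≤ 2 := by
    rw [show (2:ℝ) = ((1:ℝ)/2)⁻¹ by norm_num]
    exact inv_anti₀ (by norm_num) (by linarith)
  have hj0 : 0 ≤ ((1 + ε*(g*s))⁻¹)^2 := sq_nonneg _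
  have hj4 : ((1 + ε*(g*s))⁻¹)^2 ≤ 4 := by
    have := pow_le_pow_left₀ (inv_nonneg.2 hd0.le) hd2 2
    norm_num at this ⊢; linarith
  have hjabs : |((1 + ε*(g*s))⁻¹)^2| ≤ 4 := abs_le.2 ⟨by linarith, hj4⟩
  have hε3 : (0:ℝ) < ε^3 := pow_pos hε 3
  have hw2 : w^2 ≤ Q^2 := pow_le_pow_left₀ hw hwQ 2
  have h1w : ε^2*w^2 ≤ ε^2*Q^2 := mul_le_mul_of_nonneg_left hw2 (by positivity)
  have hsQ : |s| ≤ Q := hsw.trans hwQ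
  have hεs : |ε*s| ≤ ε*Q := by
    rw [abs_mul, abs_of_pos hε]
    exact mul_le_mul_of_nonneg_left hsQ hε.le
  -- key decomposition
  have key : ε * g^3 * ((1 + ε*(g*s))⁻¹)^2 - (ε - 2*ε^2*s) =
      ε * ((g^3 - 1) * ((1 + ε*(g*s))⁻¹)^2
        + (3*(ε*(g*s))^2 + 2*(ε*(g*s))^3) * ((1 + ε*(g*s))⁻¹)^2
        + 2*(ε*s)*(1-g)) := by
    have hu := mul_inv_cancel₀ hd0.ne'
    linear_combination ε*(1-2*(ε*(g*s)))*((1 + ε*(g*s))*(1 + ε*(g*s))⁻¹+1) * hu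
  rw [key]
  -- bound on |g^3 - 1|
  have hA : 0 ≤ (1-g)*(2-g-g^2) := mul_nonneg (by linarith) (by nlinarith)
  have hcube : 1 - g^3 ≤ 3*(ε^2*w^2) := by nlinarith [hA, hgnear]
  have hg3le : g^3 ≤ 1 := by nlinarith [pow_pos hg0 3]
  have hg3 : |g^3 - 1| ≤ 3*(ε^2*Q^2) := by
    rw [abs_le]; constructor
    · linarith
    · have : (0:ℝ) ≤ 3*(ε^2*Q^2) := by positivity
      linarith
  have hb1 : |(g^3 - 1) * ((1 + ε*(g*s))⁻¹)^2| ≤ (3*(ε^2*Q^2))*4 := abs_mul_le2 hg3 hjabs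
  -- bound on |3u^2 + 2u^3|
  have hu2 : (ε*(g*s))^2 ≤ ε^2*Q^2 := by
    rw [← sq_abs]
    have h2 : |ε*(g*s)|^2 ≤ (ε*w)^2 := pow_le_pow_left₀ (abs_nonneg _) hus 2
    have h3 : (ε*w)^2 = ε^2*w^2 := by ring
    linarith
  have hcub : |ε*(g*s)|^3 ≤ (1/2)*(ε*(g*s))^2 := by
    have h5 := sq_abs (ε*(g*s))
    nlinarith [abs_nonneg (ε*(g*s)), huh,
      mul_le_mul_of_nonneg_right huh (sq_nonneg |ε*(g*s)|)]
  have hc1 : (ε*(g*s))^3 ≤ |ε*(g*s)|^3 := by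
    rw [← abs_pow]; exact le_abs_self _
  have hc2 : -(|ε*(g*s)|^3) ≤ (ε*(g*s))^3 := by
    rw [← abs_pow]; exact neg_abs_le _
  have habs2 : |3*(ε*(g*s))^2 + 2*(ε*(g*s))^3| ≤ 4*(ε^2*Q^2) := by
    rw [abs_le]; constructor
    · nlinarith [hc2, hcub, hu2, sq_nonneg (ε*(g*s))]
    · nlinarith [hc1, hcub, hu2, sq_nonneg (ε*(g*s))]
  have hb2 : |(3*(ε*(g*s))^2 + 2*(ε*(g*s))^3) * ((1 + ε*(g*s))⁻¹)^2| ≤ (4*(ε^2*Q^2))*4 :=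
    abs_mul_le2 habs2 hjabs
  -- bound on |2*(ε*s)*(1-g)|
  have hgm1 : |1-g| ≤ ε^2*Q^2 := by
    rw [abs_le]; constructor
    · have : (0:ℝ) ≤ ε^2*Q^2 := by positivity
      linarith
    · linarith
  have hb3 : |2*(ε*s)*(1-g)| ≤ (2*(ε*Q))*(ε^2*Q^2) := by
    refine abs_mul_le2 ?_ hgm1
    rw [abs_mul, abs_of_nonneg (by norm_num : (0:ℝ) ≤ 2)]
    exact mul_le_mul_of_nonneg_left hεs (by norm_num)
  -- combine
  have hsum : |(g^3 - 1) * ((1 + ε*(g*s))⁻¹)^2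
        + (3*(ε*(g*s))^2 + 2*(ε*(g*s))^3) * ((1 + ε*(g*s))⁻¹)^2
        + 2*(ε*s)*(1-g)| ≤ (3*(ε^2*Q^2))*4 + (4*(ε^2*Q^2))*4 + (2*(ε*Q))*(ε^2*Q^2) := by
    refine le_trans (abs_add_le _ _) ?_
    have := abs_add_le ((g^3 - 1) * ((1 + ε*(g*s))⁻¹)^2)
      ((3*(ε*(g*s))^2 + 2*(ε*(g*s))^3) * ((1 + ε*(g*s))⁻¹)^2)
    linarith
  rw [abs_mul, abs_of_pos hε]
  have hfin : ε * ((3*(ε^2*Q^2))*4 + (4*(ε^2*Q^2))*4 + (2*(ε*Q))*(ε^2*Q^2)) ≤ 30*(ε^3*Q^3) := by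
    have h1 : ε^3*Q^2 ≤ ε^3*Q^3 :=
      mul_le_mul_of_nonneg_left (pow_le_pow_right₀ hQ (by norm_num)) hε3.le
    have h2 : ε^4*Q^3 ≤ ε^3*Q^3 := by
      have h3 : ε^4 ≤ ε^3 := pow_le_pow_of_le_one hε.le hε1 (by norm_num)
      exact mul_le_mul_of_nonneg_right h3 (by positivity)
    nlinarith [h1, h2]
  calc ε * |(g^3 - 1) * ((1 + ε*(g*s))⁻¹)^2
        + (3*(ε*(g*s))^2 + 2*(ε*(g*s))^3) * ((1 + ε*(g*s))⁻¹)^2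
        + 2*(ε*s)*(1-g)| ≤
      ε * ((3*(ε^2*Q^2))*4 + (4*(ε^2*Q^2))*4 + (2*(ε*Q))*(ε^2*Q^2)) :=
    mul_le_mul_of_nonneg_left hsum hε.le
    _ ≤ 30*(ε^3*Q^3) := hfin

theorem KT_expansion (P : ℝ) (hP : 0 < P) :
    ∃ M : ℝ, 0 < M ∧ ∀ c : ℝ, 1 ≤ c → 2 * P ≤ c →
      ∀ zb v : E3, ‖zb‖ = 1 → ‖v‖ ≤ P →
        ‖KT c zb v -
          (zb + c⁻¹ • (v - (2 * ⟪zb, v⟫) • zb)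
            + c⁻¹ ^ 2 • ((3 * ⟪zb, v⟫ ^ 2) • zb - ‖v‖ ^ 2 • zb - (2 * ⟪zb, v⟫) • v))‖
          ≤ M * c⁻¹ ^ 3 := by
  refine ⟨100 * (max P 1)^5, by positivity, ?_⟩
  intro c hc1 hc2 zb v hz hv
  have hc0 : (0:ℝ) < c := lt_of_lt_of_le one_pos hc1
  have hε : 0 < c⁻¹ := inv_pos.2 hc0
  have hε1 : c⁻¹ ≤ 1 := inv_le_one_of_one_le₀ hc1
  have hw : (0:ℝ) ≤ ‖v‖ := norm_nonneg v
  have hεw : c⁻¹ * ‖v‖ ≤ 1/2 := by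
    rw [inv_mul_le_iff₀ hc0]
    linarith
  have hsw : |⟪zb, v⟫| ≤ ‖v‖ := by
    have h := abs_real_inner_le_norm zb v
    rw [hz, one_mul] at h
    exact h
  have hwQ : ‖v‖ ≤ max P 1 := hv.trans (le_max_left _ _)
  have hQ : (1:ℝ) ≤ max P 1 := le_max_right _ _
  -- the Lorentz factor
  set g := (Real.sqrt (1 + c⁻¹ ^ 2 * ‖v‖ ^ 2))⁻¹ with hgdef
  have hx0 : (0:ℝ) ≤ c⁻¹ ^ 2 * ‖v‖ ^ 2 := by positivity
  have hx0' : (0:ℝ) ≤ 1 + c⁻¹ ^ 2 * ‖v‖ ^ 2 := by linarith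
  have hsq1 : 1 ≤ Real.sqrt (1 + c⁻¹ ^ 2 * ‖v‖ ^ 2) := by
    rw [Real.one_le_sqrt]
    · linarith
  have hg0 : 0 < g := by
    rw [hgdef]
    exact inv_pos.2 (by linarith)
  have hg1 : g ≤ 1 := by
    rw [hgdef]
    exact inv_le_one_of_one_le₀ hsq1
  have hgid : g^2 * (1 + c⁻¹ ^ 2 * ‖v‖ ^ 2) = 1 := by
    have h2 : g^2 = (1 + c⁻¹ ^ 2 * ‖v‖ ^ 2)⁻¹ := by
      rw [hgdef, inv_pow, Real.sq_sqrt hx0']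
    rw [h2]
    exact inv_mul_cancel₀ (by linarith)
  have hgnear : 1 - g ≤ c⁻¹ ^ 2 * ‖v‖ ^ 2 := by
    have hsl : Real.sqrt (1 + c⁻¹ ^ 2 * ‖v‖ ^ 2) ≤ 1 + c⁻¹ ^ 2 * ‖v‖ ^ 2 := by
      refine le_trans (Real.sqrt_one_add_le (by linarith)) (by linarith)
    have h4 : (1 + c⁻¹ ^ 2 * ‖v‖ ^ 2)⁻¹ ≤ g := by
      rw [hgdef]
      exact inv_anti₀ (by linarith) hsl
    have h6 : (1 - c⁻¹ ^ 2 * ‖v‖ ^ 2) * (1 + c⁻¹ ^ 2 * ‖v‖ ^ 2) ≤ 1 := by nlinarith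
    have h7 : (0:ℝ) < 1 + c⁻¹ ^ 2 * ‖v‖ ^ 2 := by linarith
    have h5 : 1 - c⁻¹ ^ 2 * ‖v‖ ^ 2 ≤ (1 + c⁻¹ ^ 2 * ‖v‖ ^ 2)⁻¹ := by
      calc 1 - c⁻¹ ^ 2 * ‖v‖ ^ 2
          = (1 - c⁻¹ ^ 2 * ‖v‖ ^ 2) * (1 + c⁻¹ ^ 2 * ‖v‖ ^ 2) / (1 + c⁻¹ ^ 2 * ‖v‖ ^ 2) := by
            field_simp
        _ ≤ 1 / (1 + c⁻¹ ^ 2 * ‖v‖ ^ 2) := (div_le_div_iff_of_pos_right h7).2 h6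
        _ = (1 + c⁻¹ ^ 2 * ‖v‖ ^ 2)⁻¹ := one_div _
    linarith
  -- rewrite KT
  have hvhat : vhat c v = g • v := by rw [vhat, hgdef]
  have hinner : ⟪zb, vhat c v⟫ = g * ⟪zb, v⟫ := by
    rw [hvhat, real_inner_smul_right]
  have hnormv : ‖vhat c v‖ ^ 2 = g^2 * ‖v‖ ^ 2 := by
    rw [hvhat, norm_smul, Real.norm_eq_abs, abs_of_pos hg0, mul_pow]
  have hone : 1 - c⁻¹ ^ 2 * ‖vhat c v‖ ^ 2 = g^2 := by
    rw [hnormv]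
    linear_combination -hgid
  have hKT : KT c zb v =
      (g^2 * ((1 + c⁻¹*(g*⟪zb, v⟫))⁻¹)^2) • zb
        + (c⁻¹ * g^3 * ((1 + c⁻¹*(g*⟪zb, v⟫))⁻¹)^2) • v := by
    rw [KT, hinner, hone, hvhat]
    module
  have hdiff : KT c zb v -
      (zb + c⁻¹ • (v - (2 * ⟪zb, v⟫) • zb)
        + c⁻¹ ^ 2 • ((3 * ⟪zb, v⟫ ^ 2) • zb - ‖v‖ ^ 2 • zb - (2 * ⟪zb, v⟫) • v)) =
      (g^2 * ((1 + c⁻¹*(g*⟪zb, v⟫))⁻¹)^2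
        - (1 - 2*c⁻¹*⟪zb, v⟫ + c⁻¹^2*(3*⟪zb, v⟫^2 - ‖v‖^2))) • zb
      + (c⁻¹ * g^3 * ((1 + c⁻¹*(g*⟪zb, v⟫))⁻¹)^2
        - (c⁻¹ - 2*c⁻¹^2*⟪zb, v⟫)) • v := by
    rw [hKT]
    module
  rw [hdiff]
  have hA := scalarA c⁻¹ ⟪zb, v⟫ ‖v‖ (max P 1) g hε hε1 hw hsw hwQ hQ hεw hg0 hg1 hgid hgnear
  have hB := scalarB c⁻¹ ⟪zb, v⟫ ‖v‖ (max P 1) g hε hε1 hw hsw hwQ hQ hεw hg0 hg1 hgid hgnear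
  have hQ0 : (0:ℝ) < max P 1 := lt_of_lt_of_le one_pos hQ
  have hε3 : (0:ℝ) < c⁻¹^3 := pow_pos hε 3
  calc ‖(g^2 * ((1 + c⁻¹*(g*⟪zb, v⟫))⁻¹)^2
        - (1 - 2*c⁻¹*⟪zb, v⟫ + c⁻¹^2*(3*⟪zb, v⟫^2 - ‖v‖^2))) • zb
      + (c⁻¹ * g^3 * ((1 + c⁻¹*(g*⟪zb, v⟫))⁻¹)^2
        - (c⁻¹ - 2*c⁻¹^2*⟪zb, v⟫)) • v‖
      ≤ ‖(g^2 * ((1 + c⁻¹*(g*⟪zb, v⟫))⁻¹)^2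
        - (1 - 2*c⁻¹*⟪zb, v⟫ + c⁻¹^2*(3*⟪zb, v⟫^2 - ‖v‖^2))) • zb‖
      + ‖(c⁻¹ * g^3 * ((1 + c⁻¹*(g*⟪zb, v⟫))⁻¹)^2
        - (c⁻¹ - 2*c⁻¹^2*⟪zb, v⟫)) • v‖ := norm_add_le _ _
    _ = |g^2 * ((1 + c⁻¹*(g*⟪zb, v⟫))⁻¹)^2
        - (1 - 2*c⁻¹*⟪zb, v⟫ + c⁻¹^2*(3*⟪zb, v⟫^2 - ‖v‖^2))| * 1
      + |c⁻¹ * g^3 * ((1 + c⁻¹*(g*⟪zb, v⟫))⁻¹)^2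
        - (c⁻¹ - 2*c⁻¹^2*⟪zb, v⟫)| * ‖v‖ := by
        rw [norm_smul, norm_smul, hz, Real.norm_eq_abs, Real.norm_eq_abs]
    _ ≤ 50*(c⁻¹^3*(max P 1)^5) * 1 + 30*(c⁻¹^3*(max P 1)^3) * (max P 1) := by
        refine add_le_add (mul_le_mul_of_nonneg_right hA zero_le_one) ?_
        exact mul_le_mul hB hwQ hw (by positivity)
    _ ≤ 100 * (max P 1)^5 * c⁻¹ ^ 3 := by
        have h1 : c⁻¹^3*(max P 1)^4 ≤ c⁻¹^3*(max P 1)^5 :=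
          mul_le_mul_of_nonneg_left (pow_le_pow_right₀ hQ (by norm_num)) hε3.le
        nlinarith [hε3, pow_pos hQ0 5]
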